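/- Let K be a field whose multiplicative group K^× is divisible, and let φ : K^× → K^× be a surjective group homomorphism. Then for every prime p, |(ker φ)[p]| = |ker φ / p(ker φ)| ≤ p, where G[p] denotes the p-torsion subgroup and pG the subgroup of p-th powers (written additively: multiples). -/

import Mathlib

/-- If `K^×` is divisible and `φ : K^× → K^×` is a surjective homomorphism, then for every
prime `p`, `|(ker φ)[p]| = |ker φ / (ker φ)^p| ≤ p`. -/
theorem ker_surjective_endo_torsion_card {K : Type*} [Field K]
    (hdiv : ∀ x : Kˣ, ∀ n : ℕ, 0 < n → ∃ y : Kˣ, y ^ n = x)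
    (φ : Kˣ →* Kˣ) (hsurj : Function.Surjective φ) :
    ∀ p : ℕ, p.Prime →
      Nat.card {g : φ.ker | g ^ p = 1} =
          Nat.card (φ.ker ⧸ (powMonoidHom p : φ.ker →* φ.ker).range) ∧
        Nat.card {g : φ.ker | g ^ p = 1} ≤ p := by
  intro p hp
  haveI : NeZero p := ⟨hp.ne_zero⟩
  set T : Subgroup Kˣ := rootsOfUnity p K with hTdef
  set R : Subgroup φ.ker := (powMonoidHom p : φ.ker →* φ.ker).range with hRdef
  -- f : T →* T, restriction of φ
  have hmap : ∀ x : T, φ (x : Kˣ) ∈ T := by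
    intro x
    refine (mem_rootsOfUnity ..).mpr ?_
    rw [← map_pow, (mem_rootsOfUnity ..).mp x.2, map_one]
  let f : T →* T := (φ.domRestrict T).codRestrict T hmap
  -- key well-definedness lemma
  have key : ∀ (y y' : Kˣ), φ y = φ y' → ∀ (h : y ^ p ∈ φ.ker) (h' : y' ^ p ∈ φ.ker),
      (QuotientGroup.mk (⟨y ^ p, h⟩ : φ.ker) : φ.ker ⧸ R) = QuotientGroup.mk ⟨y' ^ p, h'⟩ := by
    intro y y' hyy' h h'
    have hg : y⁻¹ * y' ∈ φ.ker := by
      rw [MonoidHom.mem_ker, map_mul, map_inv, hyy', inv_mul_cancel]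
    rw [QuotientGroup.eq]
    refine ⟨⟨y⁻¹ * y', hg⟩, ?_⟩
    ext
    push_cast [powMonoidHom_apply]
    rw [mul_pow, inv_pow]
  have hpre : ∀ x : T, (Function.surjInv hsurj (x : Kˣ)) ^ p ∈ φ.ker := by
    intro x
    rw [MonoidHom.mem_ker, map_pow, Function.surjInv_eq hsurj,
      (mem_rootsOfUnity ..).mp x.2]
  -- the connecting map δ
  let δ0 : T → φ.ker ⧸ R := fun x =>
    QuotientGroup.mk ⟨(Function.surjInv hsurj (x : Kˣ)) ^ p, hpre x⟩
  have δ0mul : ∀ a b : T, δ0 (a * b) = δ0 a * δ0 b := by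
    intro a b
    have h1 : (Function.surjInv hsurj ((a : Kˣ)) * Function.surjInv hsurj ((b : Kˣ))) ^ p
        ∈ φ.ker := by
      rw [MonoidHom.mem_ker, map_pow, map_mul, Function.surjInv_eq hsurj,
        Function.surjInv_eq hsurj, ← Subgroup.coe_mul]
      exact (mem_rootsOfUnity ..).mp (a * b).2
    have h2 : φ (Function.surjInv hsurj ((a * b : T) : Kˣ)) =
        φ (Function.surjInv hsurj (a : Kˣ) * Function.surjInv hsurj (b : Kˣ)) := by
      rw [map_mul, Function.surjInv_eq hsurj, Function.surjInv_eq hsurj,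
        Function.surjInv_eq hsurj]
      rfl
    show QuotientGroup.mk _ = QuotientGroup.mk _ * QuotientGroup.mk _
    rw [← QuotientGroup.mk_mul, key _ _ h2 (hpre (a * b)) h1]
    congr 1
    ext
    push_cast
    rw [mul_pow]
  let δ : T →* φ.ker ⧸ R := MonoidHom.mk' δ0 δ0mul
  -- δ is surjective
  have δsurj : Function.Surjective δ := by
    intro q
    induction q using QuotientGroup.induction_on with
    | H g =>
      obtain ⟨y, hy⟩ := hdiv (g : Kˣ) p hp.pos
      have hyT : φ y ∈ T := by
        refine (mem_rootsOfUnity ..).mpr ?_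
        rw [← map_pow, hy]
        exact g.2
      refine ⟨⟨φ y, hyT⟩, ?_⟩
      show QuotientGroup.mk _ = _
      have h2 : φ (Function.surjInv hsurj (φ y)) = φ y := Function.surjInv_eq hsurj _
      have hy' : y ^ p ∈ φ.ker := by rw [hy]; exact g.2
      rw [key _ _ h2 (hpre ⟨φ y, hyT⟩) hy']
      congr 1
      exact Subtype.ext hy
  -- ker δ = range f
  have hker : δ.ker = f.range := by
    ext x
    constructor
    · intro hx
      have hx' : (QuotientGroup.mk (⟨(Function.surjInv hsurj (x : Kˣ)) ^ p, hpre x⟩ : φ.ker)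
          : φ.ker ⧸ R) = 1 := hx
      have hmem : (⟨(Function.surjInv hsurj (x : Kˣ)) ^ p, hpre x⟩ : φ.ker) ∈ R :=
        (QuotientGroup.eq_one_iff _).mp hx'
      obtain ⟨g, hg⟩ := hmem
      have hgval : (g : Kˣ) ^ p = (Function.surjInv hsurj (x : Kˣ)) ^ p := by
        have := congrArg (fun z : φ.ker => (z : Kˣ)) hg
        simpa [powMonoidHom_apply] using this
      have hwT : Function.surjInv hsurj (x : Kˣ) * (g : Kˣ)⁻¹ ∈ T := by
        refine (mem_rootsOfUnity ..).mpr ?_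
        rw [mul_pow, inv_pow, hgval, mul_inv_cancel]
      refine ⟨⟨_, hwT⟩, ?_⟩
      refine Subtype.ext ?_
      show φ (Function.surjInv hsurj (x : Kˣ) * (g : Kˣ)⁻¹) = (x : Kˣ)
      rw [map_mul, map_inv, Function.surjInv_eq hsurj]
      have hg1 : φ (g : Kˣ) = 1 := g.2
      rw [hg1, inv_one, mul_one]
    · rintro ⟨z, rfl⟩
      rw [MonoidHom.mem_ker]
      show QuotientGroup.mk _ = 1
      have h2 : φ (Function.surjInv hsurj ((f z : T) : Kˣ)) = φ (z : Kˣ) := by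
        rw [Function.surjInv_eq hsurj]; rfl
      have hz' : (z : Kˣ) ^ p ∈ φ.ker := by
        rw [(mem_rootsOfUnity ..).mp z.2]; exact one_mem _
      rw [key _ _ h2 (hpre (f z)) hz', QuotientGroup.eq_one_iff]
      have h1 : (⟨(z : Kˣ) ^ p, hz'⟩ : φ.ker) = 1 :=
        Subtype.ext ((mem_rootsOfUnity ..).mp z.2)
      rw [h1]
      exact one_mem _
  -- the p-torsion of ker φ is equivalent to ker f
  have etor : {g : φ.ker | g ^ p = 1} ≃ f.ker := by
    refine ⟨fun g => ⟨⟨(g : φ.ker), ?_⟩, ?_⟩, fun x => ⟨⟨(x : T), ?_⟩, ?_⟩, ?_, ?_⟩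
    · refine (mem_rootsOfUnity ..).mpr ?_
      exact congrArg (fun z : φ.ker => (z : Kˣ)) g.2
    · have hg1 : φ ((g : φ.ker) : Kˣ) = 1 := (g : φ.ker).2
      rw [MonoidHom.mem_ker]
      exact Subtype.ext hg1
    · have hx1 : f (x : T) = 1 := x.2
      exact congrArg (fun z : T => (z : Kˣ)) hx1
    · show (⟨_, _⟩ : φ.ker) ^ p = 1
      refine Subtype.ext ?_
      rw [SubmonoidClass.coe_pow]
      exact (mem_rootsOfUnity ..).mp (x : T).2
    · intro g; rfl
    · intro x; rfl
  -- cardinal bookkeeping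
  haveI : Finite T := inferInstance
  have htle : Nat.card T ≤ p := by
    exact card_rootsOfUnity (k := p) (R := K)
  have h1 : Nat.card T = Nat.card (T ⧸ f.ker) * Nat.card f.ker :=
    Subgroup.card_eq_card_quotient_mul_card_subgroup f.ker
  have h2 : Nat.card (T ⧸ f.ker) = Nat.card f.range :=
    Nat.card_congr (QuotientGroup.quotientKerEquivRange f).toEquiv
  have h3 : Nat.card T = Nat.card (T ⧸ f.range) * Nat.card f.range :=
    Subgroup.card_eq_card_quotient_mul_card_subgroup f.range
  have h4 : Nat.card (φ.ker ⧸ R) = Nat.card (T ⧸ f.range) := by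
    rw [← hker]
    exact (Nat.card_congr (QuotientGroup.quotientKerEquivOfSurjective δ δsurj).toEquiv).symm
  haveI : Nonempty f.range := ⟨1⟩
  have hrpos : 0 < Nat.card f.range := Nat.card_pos
  have h5 : Nat.card f.ker = Nat.card (T ⧸ f.range) := by
    have h6 := h1.symm.trans h3
    rw [h2, mul_comm (Nat.card f.range) _, mul_comm (Nat.card (T ⧸ f.range)) _, mul_comm (Nat.card f.ker) _] at h6
    exact Nat.eq_of_mul_eq_mul_left hrpos h6
  have hcardtor : Nat.card {g : φ.ker | g ^ p = 1} = Nat.card f.ker := Nat.card_congr etor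
  constructor
  · rw [hcardtor, h5, h4]
  · rw [hcardtor]
    calc Nat.card f.ker ≤ Nat.card T :=
          Nat.card_le_card_of_injective _ Subtype.val_injective
      _ ≤ p := htle
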